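/- The map α_A preserves the harmonic product: α_A(w₁ * w₂) = α_A(w₁) * α_A(w₂) for all w₁, w₂ ∈ 𝔥¹ = ℚ ⊕ y𝔥. -/

import Mathlib

open scoped BigOperators

abbrev Ltr := Fin 2

/-- `𝔥 = ℚ⟨x,y⟩`, realized as the monoid algebra of the free monoid on two letters. -/
abbrev H := MonoidAlgebra ℚ (FreeMonoid Ltr)

/-- The word `u₁⋯u_m` as an element of `𝔥`. -/
noncomputable def wrd (l : List Ltr) : H := MonoidAlgebra.of ℚ (FreeMonoid Ltr) (FreeMonoid.ofList l)

/-- The generator `x`. -/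
noncomputable def Xh : H := wrd [0]
/-- The generator `y`. -/
noncomputable def Yh : H := wrd [1]

/-- Letter produced when stuffling letters `u, v`: `y` iff both are `y`, else `x`. -/
noncomputable def ellt (a b : Ltr) : H := if a = 1 ∧ b = 1 then Yh else Xh
def cc1 (a b : Ltr) : ℚ := if a = 1 ∧ b = 0 then -1 else 1
def cc2 (a b : Ltr) : ℚ := if a = 0 ∧ b = 1 then -1 else 1
def cc3 (a b : Ltr) : ℚ := if a = 0 ∧ b = 0 then -1 else 1

/-- The harmonic (stuffle) product on words of `𝔥`: on `𝔥¹` it is Hoffman's harmonic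
product defined by `w*1 = 1*w = w` and
`z_k w₁ * z_l w₂ = z_k(w₁ * z_l w₂) + z_l(z_k w₁ * w₂) + z_{k+l}(w₁ * w₂)` with
`z_n = yx^{n-1}`, extended to all of `𝔥` (compatibly, via `w₁e₁ ⊛̃ w₂e₁ = (w₁*w₂)e₁`). -/
noncomputable def starW : List Ltr → List Ltr → H
  | [], v => wrd v
  | u, [] => wrd u
  | a :: u, b :: v =>
      cc1 a b • (ellt a b * starW u (b :: v)) + cc2 a b • (ellt a b * starW (a :: u) v)
      + cc3 a b • (ellt a b * Xh * starW u v)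
termination_by u v => u.length + v.length

/-- The harmonic product `*` on `𝔥`, extended bilinearly. -/
noncomputable def star (f g : H) : H :=
  f.coeff.sum fun u cu => g.coeff.sum fun v cv => (cu * cv) • starW u.toList v.toList

/-- The shuffle product on words: `w⧢1 = 1⧢w = w`,
`u₁w₁ ⧢ u₂w₂ = u₁(w₁ ⧢ u₂w₂) + u₂(u₁w₁ ⧢ w₂)`. -/
noncomputable def shW : List Ltr → List Ltr → H
  | [], v => wrd v
  | u, [] => wrd u
  | a :: u, b :: v => wrd [a] * shW u (b :: v) + wrd [b] * shW (a :: u) v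
termination_by u v => u.length + v.length

/-- The shuffle product `⧢` on `𝔥`, extended bilinearly. -/
noncomputable def shuf (f g : H) : H :=
  f.coeff.sum fun u cu => g.coeff.sum fun v cv => (cu * cv) • shW u.toList v.toList

abbrev PS := PowerSeries H

/-- The harmonic product `*` extended coefficientwise to `𝔥[[T]]` (resp. `𝔥[[A]]`). -/
noncomputable def starPS (f g : PS) : PS :=
  PowerSeries.mk fun n =>
    ∑ p ∈ Finset.HasAntidiagonal.antidiagonal n,
      star (PowerSeries.coeff (R := H) p.1 f) (PowerSeries.coeff (R := H) p.2 g)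

/-- Membership in `𝔥¹ = ℚ ⊕ y𝔥`: every word of the support is empty or starts with `y`. -/
def inH1 (f : H) : Prop :=
  ∀ l ∈ f.coeff.support, FreeMonoid.toList l = [] ∨ (FreeMonoid.toList l).head? = some 1

/-- `α_A` on words: `α_A(1) = 1`, `α_A(vw) = v((1+xA)⁻¹ ⧢ w)`,
where `(1+xA)⁻¹ ⧢ w = Σ_n (-1)ⁿ (xⁿ ⧢ w) Aⁿ`. -/
noncomputable def alphaW : List Ltr → PS
  | [] => 1
  | v :: rest => PowerSeries.mk fun n => ((-1 : ℚ) ^ n) • (wrd [v] * shuf (Xh ^ n) (wrd rest))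

/-- The linear map `α_A : 𝔥 → 𝔥[[A]]`. -/
noncomputable def alphaA (f : H) : PS := f.coeff.sum fun u cu => cu • alphaW u.toList


-- chunk 1: basic word algebra
section Chunk1
lemma wrd_nil : wrd [] = 1 := rfl

lemma wrd_append (l m : List Ltr) : wrd (l ++ m) = wrd l * wrd m := by
  unfold wrd
  rw [← map_mul]
  rfl

lemma wrd_cons (a : Ltr) (l : List Ltr) : wrd (a :: l) = wrd [a] * wrd l :=
  wrd_append [a] l

lemma wrd_eq_single (l : List Ltr) : wrd l = MonoidAlgebra.single (FreeMonoid.ofList l) 1 := rfl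

lemma Xh_pow (n : ℕ) : Xh ^ n = wrd (List.replicate n 0) := by
  induction n with
  | zero => simp [wrd_nil]
  | succ m ih => rw [pow_succ, ih, show Xh = wrd [0] from rfl, ← wrd_append, ← List.replicate_succ']
      
lemma single_eq_smul_wrd (a : FreeMonoid Ltr) (b : ℚ) :
    MonoidAlgebra.single a b = b • wrd a.toList := by
  rw [wrd_eq_single, FreeMonoid.ofList_toList, MonoidAlgebra.smul_single, smul_eq_mul, mul_one]
end Chunk1

-- chunk 2: bilinearity
section Chunk2

noncomputable def bil (m : List Ltr → List Ltr → H) (f g : H) : H :=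
  f.coeff.sum fun u cu => g.coeff.sum fun v cv => (cu * cv) • m u.toList v.toList

lemma star_eq_bil : star = bil starW := rfl
lemma shuf_eq_bil : shuf = bil shW := rfl

variable (m : List Ltr → List Ltr → H)

lemma bil_wrd_wrd (l l' : List Ltr) : bil m (wrd l) (wrd l') = m l l' := by
  unfold bil
  rw [wrd_eq_single, wrd_eq_single, MonoidAlgebra.coeff_single, MonoidAlgebra.coeff_single]
  rw [Finsupp.sum_single_index (by simp [Finsupp.sum])]
  rw [Finsupp.sum_single_index (by simp)]
  simp

lemma bil_zero_left (g : H) : bil m 0 g = 0 := by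
  simp [bil]

lemma bil_zero_right (f : H) : bil m f 0 = 0 := by
  simp [bil]

lemma bil_add_left (f f' g : H) : bil m (f + f') g = bil m f g + bil m f' g := by
  unfold bil
  rw [MonoidAlgebra.coeff_add, Finsupp.sum_add_index']
  · intro u; simp [Finsupp.sum]
  · intro u b b'; simp [add_mul, add_smul, Finsupp.sum_add]

lemma bil_add_right (f g g' : H) : bil m f (g + g') = bil m f g + bil m f g' := by
  unfold bil
  rw [← Finsupp.sum_add]
  apply Finsupp.sum_congr
  intro u _
  rw [MonoidAlgebra.coeff_add, Finsupp.sum_add_index']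
  · intro v; simp
  · intro v b b'; simp [mul_add, add_smul]

lemma bil_smul_left (c : ℚ) (f g : H) : bil m (c • f) g = c • bil m f g := by
  unfold bil
  rw [MonoidAlgebra.coeff_smul, Finsupp.sum_smul_index (by intro u; simp [Finsupp.sum])]
  rw [Finsupp.smul_sum]
  apply Finsupp.sum_congr
  intro u _
  rw [Finsupp.smul_sum]
  apply Finsupp.sum_congr
  intro v _
  rw [mul_assoc, mul_smul]

lemma bil_smul_right (c : ℚ) (f g : H) : bil m f (c • g) = c • bil m f g := by
  unfold bil
  rw [Finsupp.smul_sum]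
  apply Finsupp.sum_congr
  intro u _
  rw [MonoidAlgebra.coeff_smul, Finsupp.sum_smul_index (by intro v; simp)]
  rw [Finsupp.smul_sum]
  apply Finsupp.sum_congr
  intro v _
  rw [smul_smul, mul_left_comm]

end Chunk2

lemma H_induction {p : H → Prop} (f : H) (h0 : p 0)
    (hA : ∀ f g : H, p f → p g → p (f + g))
    (hS : ∀ (l : List Ltr) (c : ℚ), p (c • wrd l)) : p f := by
  induction f using MonoidAlgebra.induction_linear with
  | zero => exact h0
  | add f g hf hg => exact hA f g hf hg
  | single a b => rw [single_eq_smul_wrd]; exact hS a.toList b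

-- chunk 3: defining equations, unit laws
section Chunk3

lemma starW_nil_left (v : List Ltr) : starW [] v = wrd v := by simp [starW]

lemma starW_nil_right (u : List Ltr) : starW u [] = wrd u := by
  cases u <;> simp [starW]

lemma starW_cons_cons (a b : Ltr) (u v : List Ltr) :
    starW (a :: u) (b :: v) =
      cc1 a b • (ellt a b * starW u (b :: v)) + cc2 a b • (ellt a b * starW (a :: u) v)
      + cc3 a b • (ellt a b * Xh * starW u v) := by
  rw [starW]

lemma shW_nil_left (v : List Ltr) : shW [] v = wrd v := by simp [shW]

lemma shW_nil_right (u : List Ltr) : shW u [] = wrd u := by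
  cases u <;> simp [shW]

lemma shW_cons_cons (a b : Ltr) (u v : List Ltr) :
    shW (a :: u) (b :: v) = wrd [a] * shW u (b :: v) + wrd [b] * shW (a :: u) v := by
  rw [shW]

lemma star_wrd_wrd (l l' : List Ltr) : star (wrd l) (wrd l') = starW l l' := by
  rw [star_eq_bil]; exact bil_wrd_wrd _ _ _

lemma shuf_wrd_wrd (l l' : List Ltr) : shuf (wrd l) (wrd l') = shW l l' := by
  rw [shuf_eq_bil]; exact bil_wrd_wrd _ _ _

-- star simp pack
lemma star_zero_left (g : H) : star 0 g = 0 := by rw [star_eq_bil]; exact bil_zero_left _ _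
lemma star_zero_right (f : H) : star f 0 = 0 := by rw [star_eq_bil]; exact bil_zero_right _ _
lemma star_add_left (f f' g : H) : star (f + f') g = star f g + star f' g := by
  rw [star_eq_bil]; exact bil_add_left _ _ _ _
lemma star_add_right (f g g' : H) : star f (g + g') = star f g + star f g' := by
  rw [star_eq_bil]; exact bil_add_right _ _ _ _
lemma star_smul_left (c : ℚ) (f g : H) : star (c • f) g = c • star f g := by
  rw [star_eq_bil]; exact bil_smul_left _ _ _ _
lemma star_smul_right (c : ℚ) (f g : H) : star f (c • g) = c • star f g := by
  rw [star_eq_bil]; exact bil_smul_right _ _ _ _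
lemma shuf_zero_left (g : H) : shuf 0 g = 0 := by rw [shuf_eq_bil]; exact bil_zero_left _ _
lemma shuf_zero_right (f : H) : shuf f 0 = 0 := by rw [shuf_eq_bil]; exact bil_zero_right _ _
lemma shuf_add_left (f f' g : H) : shuf (f + f') g = shuf f g + shuf f' g := by
  rw [shuf_eq_bil]; exact bil_add_left _ _ _ _
lemma shuf_add_right (f g g' : H) : shuf f (g + g') = shuf f g + shuf f g' := by
  rw [shuf_eq_bil]; exact bil_add_right _ _ _ _
lemma shuf_smul_left (c : ℚ) (f g : H) : shuf (c • f) g = c • shuf f g := by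
  rw [shuf_eq_bil]; exact bil_smul_left _ _ _ _
lemma shuf_smul_right (c : ℚ) (f g : H) : shuf f (c • g) = c • shuf f g := by
  rw [shuf_eq_bil]; exact bil_smul_right _ _ _ _

lemma star_one_left (g : H) : star 1 g = g := by
  induction g using H_induction with
  | h0 => exact star_zero_right _
  | hA f g hf hg => rw [star_add_right, hf, hg]
  | hS l c => rw [star_smul_right, ← wrd_nil, star_wrd_wrd, starW_nil_left]

lemma star_one_right (f : H) : star f 1 = f := by
  induction f using H_induction with
  | h0 => exact star_zero_left _
  | hA f g hf hg => rw [star_add_left, hf, hg]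
  | hS l c => rw [star_smul_left, ← wrd_nil, star_wrd_wrd, starW_nil_right]

lemma shuf_one_left (g : H) : shuf 1 g = g := by
  induction g using H_induction with
  | h0 => exact shuf_zero_right _
  | hA f g hf hg => rw [shuf_add_right, hf, hg]
  | hS l c => rw [shuf_smul_right, ← wrd_nil, shuf_wrd_wrd, shW_nil_left]

lemma shuf_one_right (f : H) : shuf f 1 = f := by
  induction f using H_induction with
  | h0 => exact shuf_zero_left _
  | hA f g hf hg => rw [shuf_add_left, hf, hg]
  | hS l c => rw [shuf_smul_left, ← wrd_nil, shuf_wrd_wrd, shW_nil_right]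

end Chunk3

-- chunk 4: x-pull
section Chunk4

lemma ltr_cases (b : Ltr) : b = 0 ∨ b = 1 := by
  rcases b with ⟨_ | _ | n, h⟩
  · left; rfl
  · right; rfl
  · omega

lemma starW_pull : ∀ N, ∀ u v : List Ltr, u.length + v.length ≤ N →
    starW (0 :: u) v = Xh * starW u v ∧ starW u (0 :: v) = Xh * starW u v := by
  intro N
  induction N with
  | zero =>
      intro u v h
      have hu : u = [] := by cases u <;> simp_all
      have hv : v = [] := by cases v <;> simp_all
      subst hu; subst hv
      constructor
      · rw [starW_nil_right, starW_nil_left, wrd_nil, mul_one]; rfl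
      · rw [starW_nil_left, starW_nil_left, wrd_nil, mul_one]; rfl
  | succ N ih =>
      intro u v h
      constructor
      · cases v with
        | nil =>
            rw [starW_nil_right, starW_nil_right, wrd_cons]; rfl
        | cons b v' =>
            have h1 : u.length + v'.length ≤ N := by simp at h; omega
            rw [starW_cons_cons]
            rcases ltr_cases b with rfl | rfl
            · simp only [(ih u v' h1).1, (ih u v' h1).2]
              simp only [cc1, cc2, cc3, ellt]
              norm_num
              noncomm_ring
            · simp only [(ih u v' h1).1]
              simp only [cc1, cc2, cc3, ellt]
              norm_num
              noncomm_ring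
      · cases u with
        | nil =>
            rw [starW_nil_left, starW_nil_left, wrd_cons]; rfl
        | cons a u' =>
            have h1 : u'.length + v.length ≤ N := by simp at h; omega
            rw [starW_cons_cons]
            rcases ltr_cases a with rfl | rfl
            · simp only [(ih u' v h1).1, (ih u' v h1).2]
              simp only [cc1, cc2, cc3, ellt]
              norm_num
              noncomm_ring
            · simp only [(ih u' v h1).2]
              simp only [cc1, cc2, cc3, ellt]
              norm_num
              noncomm_ring
end Chunk4

-- chunk 5: lifted star/shuf structure lemmas
section Chunk5

lemma star_wrd0_left (w : List Ltr) (g : H) : star (wrd (0 :: w)) g = Xh * star (wrd w) g := by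
  induction g using H_induction with
  | h0 => rw [star_zero_right, star_zero_right, mul_zero]
  | hA f g hf hg => rw [star_add_right, star_add_right, hf, hg, mul_add]
  | hS l c =>
      rw [star_smul_right, star_smul_right, star_wrd_wrd, star_wrd_wrd,
        (starW_pull (w.length + l.length) w l le_rfl).1, mul_smul_comm]

lemma star_wrd0_right (w : List Ltr) (f : H) : star f (wrd (0 :: w)) = Xh * star f (wrd w) := by
  induction f using H_induction with
  | h0 => rw [star_zero_left, star_zero_left, mul_zero]
  | hA f g hf hg => rw [star_add_left, star_add_left, hf, hg, mul_add]
  | hS l c =>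
      rw [star_smul_left, star_smul_left, star_wrd_wrd, star_wrd_wrd,
        (starW_pull (l.length + w.length) l w le_rfl).2, mul_smul_comm]

lemma wrd0_mul (l : List Ltr) : Xh * wrd l = wrd (0 :: l) := (wrd_cons 0 l).symm

lemma star_Xh_left (f g : H) : star (Xh * f) g = Xh * star f g := by
  induction f using H_induction with
  | h0 => rw [mul_zero, star_zero_left, mul_zero]
  | hA f f' hf hg => rw [mul_add, star_add_left, star_add_left, hf, hg, mul_add]
  | hS l c =>
      rw [mul_smul_comm, star_smul_left, star_smul_left, wrd0_mul, star_wrd0_left, mul_smul_comm]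

lemma star_Xh_right (f g : H) : star f (Xh * g) = Xh * star f g := by
  induction g using H_induction with
  | h0 => rw [mul_zero, star_zero_right, mul_zero]
  | hA g g' hf hg => rw [mul_add, star_add_right, star_add_right, hf, hg, mul_add]
  | hS l c =>
      rw [mul_smul_comm, star_smul_right, star_smul_right, wrd0_mul, star_wrd0_right,
        mul_smul_comm]

lemma star_xpow_left (n : ℕ) (f g : H) : star (Xh ^ n * f) g = Xh ^ n * star f g := by
  induction n with
  | zero => rw [pow_zero, one_mul, one_mul]
  | succ n ih => rw [pow_succ', mul_assoc, star_Xh_left, ih, ← mul_assoc, ← pow_succ']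

lemma star_xpow_right (n : ℕ) (f g : H) : star f (Xh ^ n * g) = Xh ^ n * star f g := by
  induction n with
  | zero => rw [pow_zero, one_mul, one_mul]
  | succ n ih => rw [pow_succ', mul_assoc, star_Xh_right, ih, ← mul_assoc, ← pow_succ']

lemma starMul_w1 (a b : Ltr) (w : List Ltr) (g : H) :
    star (wrd (a :: w)) (wrd [b] * g) =
      cc1 a b • (ellt a b * star (wrd w) (wrd [b] * g))
      + cc2 a b • (ellt a b * star (wrd (a :: w)) g)
      + cc3 a b • (ellt a b * Xh * star (wrd w) g) := by
  induction g using H_induction with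
  | h0 => simp [star_zero_right]
  | hA f g hf hg =>
      simp only [mul_add, star_add_right, hf, hg, smul_add]
      module
  | hS l c =>
      simp only [mul_smul_comm, star_smul_right, ← wrd_cons, star_wrd_wrd,
        starW_cons_cons, smul_add, smul_smul, mul_add]
      module

lemma star_mulW (a b : Ltr) (f g : H) :
    star (wrd [a] * f) (wrd [b] * g) =
      cc1 a b • (ellt a b * star f (wrd [b] * g))
      + cc2 a b • (ellt a b * star (wrd [a] * f) g)
      + cc3 a b • (ellt a b * Xh * star f g) := by
  induction f using H_induction with
  | h0 => simp [star_zero_left]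
  | hA f f' hf hg =>
      simp only [mul_add, star_add_left, hf, hg, smul_add]
      module
  | hS l c =>
      simp only [mul_smul_comm, star_smul_left, ← wrd_cons, starMul_w1,
        smul_add, smul_smul, mul_add]
      module

lemma shuf_xpow_cons (n : ℕ) (c : Ltr) (f : H) :
    shuf (Xh ^ (n + 1)) (wrd [c] * f)
      = Xh * shuf (Xh ^ n) (wrd [c] * f) + wrd [c] * shuf (Xh ^ (n + 1)) f := by
  induction f using H_induction with
  | h0 => simp [shuf_zero_right]
  | hA f f' hf hg =>
      simp only [mul_add, shuf_add_right, hf, hg, smul_add]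
      module
  | hS l q =>
      simp only [mul_smul_comm, shuf_smul_right, ← smul_add]
      congr 1
      rw [← wrd_cons, Xh_pow (n+1), Xh_pow n, shuf_wrd_wrd, shuf_wrd_wrd, shuf_wrd_wrd,
        List.replicate_succ, shW_cons_cons]
      rfl

end Chunk5

-- chunk 6: partial-sum machinery
section Chunk6

noncomputable def shn (u : List Ltr) (i : ℕ) : H := shuf (Xh ^ i) (wrd u)

noncomputable def SF (F G : ℕ → H) (n : ℕ) : H :=
  ∑ i ∈ Finset.range (n + 1), star (F i) (G (n - i))

noncomputable def SFm1 (F G : ℕ → H) : ℕ → H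
  | 0 => 0
  | n + 1 => SF F G n

noncomputable def Sn (n : ℕ) (u v : List Ltr) : H := SF (shn u) (shn v) n

noncomputable def Snm1 : ℕ → List Ltr → List Ltr → H
  | 0, _, _ => 0
  | n + 1, u, v => Sn n u v

lemma SFm1_succ (F G : ℕ → H) (n : ℕ) : SFm1 F G (n + 1) = SF F G n := rfl

lemma Snm1_succ (n : ℕ) (u v : List Ltr) : Snm1 (n + 1) u v = Sn n u v := rfl

lemma Snm1_eq (n : ℕ) (u v : List Ltr) : Snm1 n u v = SFm1 (shn u) (shn v) n := by
  cases n <;> rfl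

lemma TL (c : Ltr) (p : H) (F : ℕ → H) (n : ℕ) :
    SF (fun i => shuf (Xh ^ i) (wrd [c] * p)) F n
      = Xh * SFm1 (fun i => shuf (Xh ^ i) (wrd [c] * p)) F n
        + SF (fun i => wrd [c] * shuf (Xh ^ i) p) F n := by
  cases n with
  | zero =>
      simp only [SF, SFm1, Finset.range_one, Finset.sum_singleton, pow_zero, shuf_one_left,
        mul_zero, zero_add]
  | succ m =>
      simp only [SF, SFm1]
      rw [Finset.sum_range_succ', Finset.sum_range_succ' (n := m + 1)]
      have e1 : ∀ i ∈ Finset.range (m + 1),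
          star (shuf (Xh ^ (i + 1)) (wrd [c] * p)) (F (m + 1 - (i + 1)))
          = Xh * star (shuf (Xh ^ i) (wrd [c] * p)) (F (m - i))
            + star (wrd [c] * shuf (Xh ^ (i + 1)) p) (F (m - i)) := by
        intro i _
        have hh : m + 1 - (i + 1) = m - i := by omega
        rw [hh, shuf_xpow_cons, star_add_left, star_Xh_left]
      have e2 : ∀ i ∈ Finset.range (m + 1),
          star (wrd [c] * shuf (Xh ^ (i + 1)) p) (F (m + 1 - (i + 1)))
          = star (wrd [c] * shuf (Xh ^ (i + 1)) p) (F (m - i)) := by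
        intro i _; congr 2; omega
      rw [Finset.sum_congr rfl e1, Finset.sum_congr rfl e2, Finset.sum_add_distrib,
        ← Finset.mul_sum]
      simp only [pow_zero, shuf_one_left, Nat.sub_zero]
      abel

lemma TR (c : Ltr) (q : H) (F : ℕ → H) (n : ℕ) :
    SF F (fun j => shuf (Xh ^ j) (wrd [c] * q)) n
      = Xh * SFm1 F (fun j => shuf (Xh ^ j) (wrd [c] * q)) n
        + SF F (fun j => wrd [c] * shuf (Xh ^ j) q) n := by
  cases n with
  | zero =>
      simp only [SF, SFm1, Finset.range_one, Finset.sum_singleton, pow_zero, shuf_one_left,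
        mul_zero, zero_add, Nat.sub_self]
  | succ m =>
      simp only [SF, SFm1]
      rw [Finset.sum_range_succ, Finset.sum_range_succ (f := fun i => star (F i) (wrd [c] * shuf (Xh ^ (m + 1 - i)) q))]
      have e1 : ∀ i ∈ Finset.range (m + 1),
          star (F i) (shuf (Xh ^ (m + 1 - i)) (wrd [c] * q))
          = Xh * star (F i) (shuf (Xh ^ (m - i)) (wrd [c] * q))
            + star (F i) (wrd [c] * shuf (Xh ^ (m + 1 - i)) q) := by
        intro i hi
        have hh : m + 1 - i = (m - i) + 1 := by
          simp only [Finset.mem_range] at hi; omega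
        rw [hh, shuf_xpow_cons, star_add_right, star_Xh_right, ← hh]
      rw [Finset.sum_congr rfl e1, Finset.sum_add_distrib, ← Finset.mul_sum]
      simp only [Nat.sub_self, pow_zero, shuf_one_left]
      abel

end Chunk6

-- chunk 7: the key interchange lemma
section Chunk7

def elltL (a b : Ltr) : Ltr := if a = 1 ∧ b = 1 then 1 else 0

lemma ellt_wrd (a b : Ltr) : ellt a b = wrd [elltL a b] := by
  unfold ellt elltL
  split <;> rfl

lemma sum_starMul (a b : Ltr) (u' v' : List Ltr) (n : ℕ) :
    SF (fun i => wrd [a] * shn u' i) (fun j => wrd [b] * shn v' j) n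
      = cc1 a b • (ellt a b * SF (shn u') (fun j => wrd [b] * shn v' j) n)
      + cc2 a b • (ellt a b * SF (fun i => wrd [a] * shn u' i) (shn v') n)
      + cc3 a b • (ellt a b * Xh * SF (shn u') (shn v') n) := by
  symm
  simp only [SF]
  rw [Finset.mul_sum, Finset.mul_sum, Finset.mul_sum, Finset.smul_sum, Finset.smul_sum,
    Finset.smul_sum, ← Finset.sum_add_distrib, ← Finset.sum_add_distrib]
  exact Finset.sum_congr rfl fun i _ => (star_mulW a b (shn u' i) (shn v' (n - i))).symm

lemma SF_cons_right (b : Ltr) (v' : List Ltr) (F : ℕ → H) (n : ℕ) :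
    SF F (shn (b :: v')) n
      = Xh * SFm1 F (shn (b :: v')) n + SF F (fun j => wrd [b] * shn v' j) n := by
  have hsh : shn (b :: v') = fun j => shuf (Xh ^ j) (wrd [b] * wrd v') := by
    funext j; rw [shn, wrd_cons]
  rw [hsh]
  simpa only [shn] using TR b (wrd v') F n

lemma SF_cons_left (a : Ltr) (u' : List Ltr) (F : ℕ → H) (n : ℕ) :
    SF (shn (a :: u')) F n
      = Xh * SFm1 (shn (a :: u')) F n + SF (fun i => wrd [a] * shn u' i) F n := by
  have hsh : shn (a :: u') = fun i => shuf (Xh ^ i) (wrd [a] * wrd u') := by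
    funext i; rw [shn, wrd_cons]
  rw [hsh]
  simpa only [shn] using TL a (wrd u') F n

lemma Ssigma (n : ℕ) (u v : List Ltr) :
    Sn n (0 :: u) v = Xh * Snm1 n (0 :: u) v + Xh * Sn n u v := by
  rw [Sn, Snm1_eq, SF_cons_left 0 u (shn v) n]
  congr 1
  rw [Sn, SF, SF, Finset.mul_sum]
  exact Finset.sum_congr rfl fun i _ => star_Xh_left (shn u i) (shn v (n - i))

lemma Ssigma' (n : ℕ) (u v : List Ltr) :
    Sn (n + 1) (0 :: u) v - Xh * Sn n (0 :: u) v = Xh * Sn (n + 1) u v := by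
  rw [Ssigma (n + 1) u v]
  simp only [Snm1]
  abel

lemma keyK : ∀ N n : ℕ, ∀ u v : List Ltr, n + u.length + v.length ≤ N →
    shuf (Xh ^ n) (starW u v) = Sn n u v - Xh * Snm1 n u v := by
  intro N
  induction N with
  | zero =>
      intro n u v h
      have hn : n = 0 := by omega
      subst hn
      rw [pow_zero, shuf_one_left]
      simp only [Sn, SF, Snm1, mul_zero, sub_zero, zero_add, Finset.range_one,
        Finset.sum_singleton, shn, pow_zero, shuf_one_left, star_wrd_wrd, Nat.sub_self]
  | succ N ih =>
      intro n u v h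
      match n with
      | 0 =>
          rw [pow_zero, shuf_one_left]
          simp only [Sn, SF, Snm1, mul_zero, sub_zero, zero_add, Finset.range_one,
            Finset.sum_singleton, shn, pow_zero, shuf_one_left, star_wrd_wrd, Nat.sub_self]
      | (m + 1) =>
          cases u with
          | nil =>
              rw [starW_nil_left]
              simp only [Sn, Snm1, SF]
              have hterm : ∀ k : ℕ, ∀ i ∈ Finset.range (k + 1),
                  star (shn ([] : List Ltr) i) (shn v (k - i)) = Xh ^ i * shn v (k - i) := by
                intro k i _
                rw [shn, wrd_nil, shuf_one_right, show (Xh ^ i : H) = Xh ^ i * 1 by rw [mul_one],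
                  star_xpow_left, star_one_left, mul_one]
              rw [Finset.sum_congr rfl (hterm (m + 1)), Finset.sum_congr rfl (hterm m),
                Finset.sum_range_succ', Finset.mul_sum]
              have e2 : ∀ i ∈ Finset.range (m + 1),
                  Xh ^ (i + 1) * shn v (m + 1 - (i + 1)) = Xh * (Xh ^ i * shn v (m - i)) := by
                intro i _
                have hh : m + 1 - (i + 1) = m - i := by omega
                rw [hh, pow_succ', mul_assoc]
              rw [Finset.sum_congr rfl e2]
              simp only [pow_zero, one_mul, Nat.sub_zero, shn]
              abel
          | cons a u' =>
            cases v with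
            | nil =>
                rw [starW_nil_right]
                simp only [Sn, Snm1, SF]
                have hterm : ∀ k : ℕ, ∀ i ∈ Finset.range (k + 1),
                    star (shn (a :: u') i) (shn ([] : List Ltr) (k - i))
                      = Xh ^ (k - i) * shn (a :: u') i := by
                  intro k i _
                  rw [shn, shn, wrd_nil, shuf_one_right,
                    show (Xh ^ (k - i) : H) = Xh ^ (k - i) * 1 by rw [mul_one],
                    star_xpow_right, star_one_right, mul_one]
                rw [Finset.sum_congr rfl (hterm (m + 1)), Finset.sum_congr rfl (hterm m),
                  Finset.sum_range_succ, Finset.mul_sum]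
                have e2 : ∀ i ∈ Finset.range (m + 1),
                    Xh ^ (m + 1 - i) * shn (a :: u') i
                      = Xh * (Xh ^ (m - i) * shn (a :: u') i) := by
                  intro i hi
                  have hh : m + 1 - i = (m - i) + 1 := by
                    simp only [Finset.mem_range] at hi; omega
                  rw [hh, pow_succ', mul_assoc]
                rw [Finset.sum_congr rfl e2]
                simp only [Nat.sub_self, pow_zero, one_mul, shn]
                abel
            | cons b v' =>
                simp only [List.length_cons] at h
                have ih1 : shuf (Xh ^ m) (starW (a :: u') (b :: v'))
                    = Sn m (a :: u') (b :: v') - Xh * Snm1 m (a :: u') (b :: v') :=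
                  ih m (a :: u') (b :: v') (by simp only [List.length_cons]; omega)
                have ih2 : shuf (Xh ^ (m + 1)) (starW u' (b :: v'))
                    = Sn (m + 1) u' (b :: v') - Xh * Sn m u' (b :: v') := by
                  have := ih (m + 1) u' (b :: v') (by simp only [List.length_cons]; omega)
                  simpa only [Snm1] using this
                have ih3 : shuf (Xh ^ (m + 1)) (starW (a :: u') v')
                    = Sn (m + 1) (a :: u') v' - Xh * Sn m (a :: u') v' := by
                  have := ih (m + 1) (a :: u') v' (by simp only [List.length_cons]; omega)
                  simpa only [Snm1] using this
                have ih4 : shuf (Xh ^ (m + 1)) (Xh * starW u' v') = Xh * Sn (m + 1) u' v' := by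
                  rw [← (starW_pull (u'.length + 1 + v'.length) u' v' (by omega)).1]
                  have := ih (m + 1) (0 :: u') v' (by simp only [List.length_cons]; omega)
                  rw [this]
                  simpa only [Snm1] using Ssigma' m u' v'
                have collect : shuf (Xh ^ m) (starW (a :: u') (b :: v'))
                    = cc1 a b • shuf (Xh ^ m) (wrd [elltL a b] * starW u' (b :: v'))
                      + cc2 a b • shuf (Xh ^ m) (wrd [elltL a b] * starW (a :: u') v')
                      + cc3 a b • shuf (Xh ^ m) (wrd [elltL a b] * (Xh * starW u' v')) := by
                  rw [starW_cons_cons, shuf_add_right, shuf_add_right, shuf_smul_right,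
                    shuf_smul_right, shuf_smul_right, ellt_wrd, mul_assoc]
                have hR : Sn (m + 1) (a :: u') (b :: v') - Xh * Snm1 (m + 1) (a :: u') (b :: v')
                    = Xh * (Sn m (a :: u') (b :: v') - Xh * Snm1 m (a :: u') (b :: v'))
                      + (cc1 a b • (ellt a b *
                            (Sn (m+1) u' (b :: v') - Xh * Sn m u' (b :: v')))
                        + cc2 a b • (ellt a b *
                            (Sn (m+1) (a :: u') v' - Xh * Sn m (a :: u') v'))
                        + cc3 a b • (ellt a b * Xh * Sn (m+1) u' v')) := by
                  have e1 := SF_cons_left a u' (shn (b :: v')) (m + 1)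
                  have e0 := SF_cons_left a u' (shn (b :: v')) m
                  have f1 := SF_cons_right b v' (fun i => wrd [a] * shn u' i) (m + 1)
                  have g1 := SF_cons_right b v' (shn u') (m + 1)
                  have g2 := SF_cons_left a u' (shn v') (m + 1)
                  have g3 := sum_starMul a b u' v' (m + 1)
                  simp only [SFm1_succ] at e1 f1 g1 g2
                  simp only [Snm1_succ, Snm1_eq, Sn]
                  rw [e1, f1, g3, g1, g2, e0]
                  simp only [mul_add, mul_sub, smul_add, smul_sub]
                  module
                -- expand LHS
                rw [starW_cons_cons, shuf_add_right, shuf_add_right, shuf_smul_right,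
                  shuf_smul_right, shuf_smul_right, ellt_wrd,
                  mul_assoc (wrd [elltL a b]) Xh,
                  shuf_xpow_cons, shuf_xpow_cons, shuf_xpow_cons,
                  ih2, ih3, ih4, hR, ← ih1, collect]
                simp only [ellt_wrd, mul_add, mul_sub, smul_add, smul_sub, mul_assoc, mul_smul_comm]
                module
end Chunk7

-- chunk 8: alpha machinery and the main theorem support
section Chunk8

noncomputable def aWc (n : ℕ) (l : List Ltr) : H := PowerSeries.coeff (R := H) n (alphaW l)

lemma aWc_nil (n : ℕ) : aWc n [] = if n = 0 then 1 else 0 := by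
  simp [aWc, alphaW, PowerSeries.coeff_one]

lemma aWc_cons (n : ℕ) (c : Ltr) (r : List Ltr) :
    aWc n (c :: r) = ((-1 : ℚ)) ^ n • (wrd [c] * shuf (Xh ^ n) (wrd r)) := by
  simp [aWc, alphaW, PowerSeries.coeff_mk]

noncomputable def aA (n : ℕ) (f : H) : H := PowerSeries.coeff (R := H) n (alphaA f)

lemma alphaA_wrd (l : List Ltr) : alphaA (wrd l) = alphaW l := by
  rw [wrd_eq_single]
  unfold alphaA
  rw [MonoidAlgebra.coeff_single, Finsupp.sum_single_index (by rw [zero_smul]), one_smul, FreeMonoid.toList_ofList]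

lemma aA_wrd (n : ℕ) (l : List Ltr) : aA n (wrd l) = aWc n l := by
  rw [aA, alphaA_wrd]; rfl

lemma alphaA_zero : alphaA 0 = 0 := by
  unfold alphaA; rw [MonoidAlgebra.coeff_zero]; exact Finsupp.sum_zero_index

lemma aA_zero (n : ℕ) : aA n 0 = 0 := by rw [aA, alphaA_zero, map_zero]

lemma alphaA_add (f g : H) : alphaA (f + g) = alphaA f + alphaA g := by
  unfold alphaA
  rw [MonoidAlgebra.coeff_add, Finsupp.sum_add_index']
  · intro u; rw [zero_smul]
  · intro u b b'; rw [add_smul]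

lemma aA_add (n : ℕ) (f g : H) : aA n (f + g) = aA n f + aA n g := by
  rw [aA, aA, aA, alphaA_add, map_add]

lemma alphaA_smul (c : ℚ) (f : H) : alphaA (c • f) = c • alphaA f := by
  unfold alphaA
  rw [MonoidAlgebra.coeff_smul, Finsupp.sum_smul_index (fun u => by rw [zero_smul]), Finsupp.smul_sum]
  exact Finsupp.sum_congr fun u _ => mul_smul c _ _

lemma aA_smul (n : ℕ) (c : ℚ) (f : H) : aA n (c • f) = c • aA n f := by
  rw [aA, aA, alphaA_smul, PowerSeries.coeff_smul]

lemma aA_mulW (n : ℕ) (c : Ltr) (f : H) :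
    aA n (wrd [c] * f) = ((-1 : ℚ)) ^ n • (wrd [c] * shuf (Xh ^ n) f) := by
  induction f using H_induction with
  | h0 => rw [mul_zero, aA_zero, shuf_zero_right, mul_zero, smul_zero]
  | hA f g hf hg => rw [mul_add, aA_add, hf, hg, shuf_add_right, mul_add, smul_add]
  | hS l q =>
      rw [mul_smul_comm, aA_smul, ← wrd_cons, aA_wrd, aWc_cons]
      simp only [shuf_smul_right, mul_smul_comm, smul_smul]
      module

lemma K3 (n : ℕ) (u v : List Ltr) : shuf (Xh ^ n) (Xh * starW u v) = Xh * Sn n u v := by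
  rw [← (starW_pull (u.length + 1 + v.length) u v (by omega)).1,
    keyK (n + (0 :: u).length + v.length) n (0 :: u) v le_rfl, Ssigma]
  abel

lemma main_word (u v : List Ltr) (n : ℕ) :
    aA n (star (wrd u) (wrd v))
      = ∑ i ∈ Finset.range (n + 1), star (aWc i u) (aWc (n - i) v) := by
  cases u with
  | nil =>
      rw [star_wrd_wrd, starW_nil_left, aA_wrd]
      rw [Finset.sum_eq_single 0]
      · rw [aWc_nil]
        simp [star_one_left]
      · intro i _ hi
        rw [aWc_nil, if_neg hi, star_zero_left]
      · intro hh
        exact absurd (Finset.mem_range.mpr (by omega)) hh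
  | cons a u' =>
    cases v with
    | nil =>
        rw [star_wrd_wrd, starW_nil_right, aA_wrd]
        rw [Finset.sum_eq_single n]
        · rw [aWc_nil]
          simp [star_one_right]
        · intro i hi hne
          have : n - i ≠ 0 := by simp only [Finset.mem_range] at hi; omega
          rw [aWc_nil, if_neg this, star_zero_right]
        · intro hh
          exact absurd (Finset.mem_range.mpr (by omega)) hh
    | cons b v' =>
        have hsum : ∑ i ∈ Finset.range (n + 1), star (aWc i (a :: u')) (aWc (n - i) (b :: v'))
            = ((-1 : ℚ)) ^ n •
                SF (fun i => wrd [a] * shn u' i) (fun j => wrd [b] * shn v' j) n := by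
          rw [SF, Finset.smul_sum]
          refine Finset.sum_congr rfl fun i hi => ?_
          rw [aWc_cons, aWc_cons, star_smul_left, star_smul_right, smul_smul, ← pow_add,
            show i + (n - i) = n by simp only [Finset.mem_range] at hi; omega]
          simp only [shn]
        have q1 : SF (shn u') (fun j => wrd [b] * shn v' j) n
            = Sn n u' (b :: v') - Xh * Snm1 n u' (b :: v') := by
          rw [Sn, Snm1_eq, SF_cons_right b v' (shn u') n]; abel
        have q2 : SF (fun i => wrd [a] * shn u' i) (shn v') n
            = Sn n (a :: u') v' - Xh * Snm1 n (a :: u') v' := by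
          rw [Sn, Snm1_eq, SF_cons_left a u' (shn v') n]; abel
        rw [star_wrd_wrd, starW_cons_cons, aA_add, aA_add, aA_smul, aA_smul, aA_smul,
          ellt_wrd, mul_assoc (wrd [elltL a b]) Xh, aA_mulW, aA_mulW, aA_mulW,
          keyK (n + u'.length + (b :: v').length) n u' (b :: v') le_rfl,
          keyK (n + (a :: u').length + v'.length) n (a :: u') v' le_rfl,
          K3 n u' v', hsum, sum_starMul, q1, q2]
        have q3 : SF (shn u') (shn v') n = Sn n u' v' := rfl
        rw [q3]
        simp only [ellt_wrd, mul_add, mul_sub, smul_add, smul_sub, mul_assoc, mul_smul_comm,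
          smul_smul]
        module

lemma main_all (n : ℕ) (w₁ w₂ : H) :
    aA n (star w₁ w₂) = ∑ k ∈ Finset.range (n + 1), star (aA k w₁) (aA (n - k) w₂) := by
  induction w₁ using H_induction with
  | h0 => simp [star_zero_left, aA_zero]
  | hA f g hf hg => simp only [star_add_left, aA_add, hf, hg, Finset.sum_add_distrib]
  | hS l c =>
      simp only [star_smul_left, aA_smul, ← Finset.smul_sum]
      congr 1
      induction w₂ using H_induction with
      | h0 => simp [star_zero_right, aA_zero]
      | hA f g hf hg => simp only [star_add_right, aA_add, hf, hg, Finset.sum_add_distrib]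
      | hS m d =>
          simp only [star_smul_right, aA_smul, ← Finset.smul_sum]
          congr 1
          simp only [aA_wrd]
          exact main_word l m n

end Chunk8

theorem stmt13' (w₁ w₂ : H) :
    alphaA (star w₁ w₂) = starPS (alphaA w₁) (alphaA w₂) := by
  apply PowerSeries.ext
  intro n
  simp only [starPS, PowerSeries.coeff_mk]
  rw [Finset.Nat.sum_antidiagonal_eq_sum_range_succ_mk]
  exact main_all n w₁ w₂

/-- `α_A` preserves the harmonic product:
`α_A(w₁ * w₂) = α_A(w₁) * α_A(w₂)` for `w₁, w₂ ∈ 𝔥¹`. -/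
theorem stmt13 (w₁ w₂ : H) (h₁ : inH1 w₁) (h₂ : inH1 w₂) :
    alphaA (star w₁ w₂) = starPS (alphaA w₁) (alphaA w₂) := by
  exact stmt13' w₁ w₂
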